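/- Let G be a graph on n vertices with no subgraph isomorphic to C_{2k_1,...,2k_t} (all k_i ≥ 2, κ = Σ(k_i-1)). Then for every vertex u of G, 2·e(N_1(u)) + e(N_1(u), N_2(u)) ≤ (2κ + t/2 - 1)·(d(u) + n - 1), where N_1(u) and N_2(u) are the sets of vertices at distance 1 and 2 from u respectively. -/

import Mathlib

/-- The intersecting even cycle `C_{2k₁,…,2k_t}`. -/
def interCycles (t : ℕ) (k : Fin t → ℕ) :
    SimpleGraph (Option (Σ i : Fin t, Fin (2 * k i - 1))) :=
  SimpleGraph.fromRel (fun x y =>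
    match x, y with
    | none, some ⟨i, j⟩ => (j : ℕ) = 0 ∨ (j : ℕ) = 2 * k i - 2
    | some ⟨i, j⟩, some ⟨i', j'⟩ => i = i' ∧ (j : ℕ) + 1 = (j' : ℕ)
    | _, _ => False)

/-- `H` occurs as a subgraph of `G`. -/
def ContainsCopy {α β : Type*} (H : SimpleGraph α) (G : SimpleGraph β) : Prop :=
  ∃ f : α ↪ β, ∀ a b, H.Adj a b → G.Adj (f a) (f b)

/-- `eW G U` is the number of edges of `G` with both endpoints in `U`. -/
noncomputable def eW {V : Type*} (G : SimpleGraph V) (U : Set V) : ℕ :=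
  {e ∈ G.edgeSet | ∀ v ∈ e, v ∈ U}.ncard

/-- `eB G U W` is the number of edges of `G` with one endpoint in `U` and the
other in `W`. -/
noncomputable def eB {V : Type*} (G : SimpleGraph V) (U W : Set V) : ℕ :=
  {e ∈ G.edgeSet | ∃ u ∈ U, ∃ w ∈ W, e = s(u, w)}.ncard


section Stmt10Proof


/-- Chop lemma: on a "path pattern" `f` (no two consecutive failures),
starting at a true position `x`, with `D` even, we find a block `[v, v+D]`
with both ends true, within a window of length `2*D - 1`. -/
lemma chop (f : ℕ → Prop) (m D x : ℕ) (hDe : Even D) (hD2 : 2 ≤ D)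
    (hgap : ∀ l, l < m → f l ∨ f (l + 1)) (hfx : f x) (hxm : x + 2 * D - 1 ≤ m) :
    ∃ v, x ≤ v ∧ v + D ≤ x + 2 * D - 1 ∧ f v ∧ f (v + D) := by
  by_contra hcon
  push_neg at hcon
  have key : ∀ j, 2 * j ≤ D → f (x + 2 * j) := by
    intro j
    induction j with
    | zero => intro _; simpa using hfx
    | succ j ih =>
      intro hj
      have hj' : 2 * j ≤ D := by omega
      have hfj : f (x + 2 * j) := ih hj'
      -- fail at candidate x + 2j
      have h1 : ¬ f (x + 2 * j + D) := by
        intro hf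
        exact hcon (x + 2 * j) (by omega) (by omega) hfj (by
          have : x + 2 * j + D = (x + 2 * j) + D := by omega
          rw [← this]; exact hf)
      -- gap at position x + 2j + D gives f (x + 2j + D + 1)
      have h2 : f (x + 2 * j + D + 1) := by
        rcases hgap (x + 2 * j + D) (by omega) with h | h
        · exact absurd h h1
        · exact h
      -- fail at candidate x + 2j + 1
      have h3 : ¬ f (x + 2 * j + 1) := by
        intro hf
        exact hcon (x + 2 * j + 1) (by omega) (by omega) hf (by
          have : (x + 2 * j + 1) + D = x + 2 * j + D + 1 := by omega
          rw [this]; exact h2)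
      -- gap at position x + 2j + 1 gives f (x + 2j + 2)
      have h4 : f (x + 2 * j + 2) := by
        rcases hgap (x + 2 * j + 1) (by omega) with h | h
        · exact absurd h h3
        · exact h
      have : x + 2 * (j + 1) = x + 2 * j + 2 := by omega
      rw [this]; exact h4
  obtain ⟨c, hc⟩ := hDe
  have hfD : f (x + D) := by
    have := key c (by omega)
    have hh : x + 2 * c = x + D := by omega
    rwa [hh] at this
  exact hcon x le_rfl (by omega) hfx hfD

/-- Iterated chop. -/
lemma blocks (f : ℕ → Prop) (m t : ℕ) (D : ℕ → ℕ)
    (hgap : ∀ l, l < m → f l ∨ f (l + 1))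
    (hD2 : ∀ j, j < t → 2 ≤ D j) (hDe : ∀ j, j < t → Even (D j)) :
    ∀ r i x, i + r = t → f x →
      x + (∑ j ∈ Finset.range r, (2 * D (i + j) + 1)) ≤ m + 2 →
      ∃ v : ℕ → ℕ, x ≤ v i ∧
        (∀ j, i ≤ j → j < t → f (v j) ∧ f (v j + D j) ∧ v j + D j ≤ m) ∧
        (∀ j j', i ≤ j → j < j' → j' < t → v j + D j < v j') := by
  classical
  intro r
  induction r with
  | zero =>
    intro i x hit hfx _
    exact ⟨fun _ => x, le_rfl, fun j hj hj' => by omega, fun j j' hj hjj' hj' => by omega⟩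
  | succ r ih =>
    intro i x hit hfx hbud
    have hi : i < t := by omega
    have hDi : 2 ≤ D i := hD2 i hi
    have hsum : ∑ j ∈ Finset.range (r+1), (2 * D (i + j) + 1)
        = (∑ j ∈ Finset.range r, (2 * D (i + 1 + j) + 1)) + (2 * D i + 1) := by
      rw [Finset.sum_range_succ']
      simp only [Nat.add_zero]
      exact congrArg (fun s => s + (2 * D i + 1))
        (Finset.sum_congr rfl (fun j _ => by rw [show i + (j+1) = i + 1 + j by omega]))
    rw [hsum] at hbud
    have hrest : 5 * r ≤ ∑ j ∈ Finset.range r, (2 * D (i + 1 + j) + 1) := by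
      calc 5 * r = ∑ _j ∈ Finset.range r, 5 := by
            rw [Finset.sum_const, Finset.card_range]; ring
        _ ≤ _ := by
            apply Finset.sum_le_sum
            intro j hj
            have := hD2 (i + 1 + j) (by simp only [Finset.mem_range] at hj; omega)
            omega
    have hxm : x + 2 * D i - 1 ≤ m := by omega
    obtain ⟨w, hxw, hwend, hfw, hfwD⟩ := chop f m (D i) x (hDe i hi) hDi hgap hfx hxm
    have hwm' : w + D i ≤ m := by omega
    rcases Nat.eq_zero_or_pos r with hr0 | hrpos
    · -- last block
      refine ⟨fun _ => w, hxw, fun j hj hj' => ?_, fun j j' hj hjj' hj' => by omega⟩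
      have hji : j = i := by omega
      subst hji
      exact ⟨hfw, hfwD, hwm'⟩
    · -- find next start
      have hwm : w + D i + 1 < m := by omega
      have hnext : ∃ x', f x' ∧ w + D i < x' ∧ x' ≤ w + D i + 2 := by
        rcases hgap (w + D i + 1) (by omega) with h | h
        · exact ⟨w + D i + 1, h, by omega, by omega⟩
        · exact ⟨w + D i + 2, h, by omega, by omega⟩
      obtain ⟨x', hfx', hgt, hle⟩ := hnext
      have hbud'' : x' + (∑ j ∈ Finset.range r, (2 * D (i + 1 + j) + 1)) ≤ m + 2 := by omega
      obtain ⟨v', hxv', hv'prop, hv'ord⟩ := ih (i + 1) x' (by omega) hfx' hbud''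
      refine ⟨Function.update v' i w, by rw [Function.update_self]; exact hxw, ?_, ?_⟩
      · intro j hj hj'
        by_cases hji : j = i
        · subst hji
          rw [Function.update_self]
          exact ⟨hfw, hfwD, hwm'⟩
        · rw [Function.update_of_ne hji]
          exact hv'prop j (by omega) hj'
      · intro j j' hj hjj' hj'
        have hj'i : j' ≠ i := by omega
        by_cases hji : j = i
        · subst hji
          rw [Function.update_self, Function.update_of_ne hj'i]
          have hstep : x' ≤ v' (j + 1) := hxv'
          rcases Nat.lt_or_ge (j + 1) j' with hlt | hge
          · have h1 := hv'ord (j + 1) j' le_rfl hlt hj'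
            have h2 : 2 ≤ D (j + 1) := hD2 (j + 1) (by omega)
            omega
          · have hj'e : j' = j + 1 := by omega
            subst hj'e
            omega
        · rw [Function.update_of_ne hji, Function.update_of_ne hj'i]
          exact hv'ord j j' (by omega) hjj' hj'



/-- `q` is a path with `m` edges (vertices `q 0, …, q m`) in `H`. -/
def IsPathN {V : Type*} (H : SimpleGraph V) (q : ℕ → V) (m : ℕ) : Prop :=
  (∀ l, l < m → H.Adj (q l) (q (l + 1))) ∧
  (∀ l l', l ≤ m → l' ≤ m → q l = q l' → l = l')

lemma walk_boundary {V : Type*} {H : SimpleGraph V} (R : Set V) :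
    ∀ {a b : V} (p : H.Walk a b), a ∉ R → b ∈ R →
      ∃ z y, z ∉ R ∧ y ∈ R ∧ H.Adj z y := by
  intro a b p
  induction p with
  | nil => intro ha hb; exact absurd hb ha
  | @cons u v w h p ih =>
    intro ha hb
    by_cases hc : v ∈ R
    · exact ⟨u, v, ha, hc, h⟩
    · exact ih hc hb

lemma longest_path {V : Type*} [Fintype V] (H : SimpleGraph V) [DecidableRel H.Adj]
    (W : Finset V) (M : ℕ)
    (hadjW : ∀ x y, H.Adj x y → x ∈ W ∧ y ∈ W)
    (hdeg : ∀ x ∈ W, M ≤ 2 * (W.filter (fun y => H.Adj x y)).card)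
    (hconn : ∀ x ∈ W, ∀ y ∈ W, H.Reachable x y)
    (hne : W.Nonempty) :
    ∃ m q, IsPathN H q m ∧ (∀ l, l ≤ m → q l ∈ W) ∧ min W.card (M + 1) ≤ m + 1 := by
  classical
  obtain ⟨x₀, hx₀⟩ := hne
  set P : ℕ → Prop := fun m => ∃ q, IsPathN H q m ∧ ∀ l, l ≤ m → q l ∈ W with hP
  have hP0 : P 0 := by
    refine ⟨fun _ => x₀, ⟨fun l h => absurd h (Nat.not_lt_zero l), fun l l' h h' _ => by omega⟩,
      fun l _ => hx₀⟩
  have hbound : ∀ m', P m' → m' + 1 ≤ W.card := by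
    rintro m' ⟨q, ⟨_, hinj⟩, hqW⟩
    have : (Finset.range (m' + 1)).card ≤ W.card := by
      apply Finset.card_le_card_of_injOn q
      · intro l hl
        exact hqW l (by simpa [Nat.lt_succ_iff] using hl)
      · intro l hl l' hl' hq
        simp only [Finset.coe_range, Set.mem_Iio] at hl hl'
        exact hinj l l' (by omega) (by omega) hq
    simpa using this
  set m : ℕ := Nat.findGreatest P W.card with hm
  have hPm : P m := Nat.findGreatest_spec (m := 0) (by omega) hP0
  have hmax : ∀ m', P m' → m' ≤ m := fun m' h =>
    Nat.le_findGreatest (by have := hbound m' h; omega) h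
  obtain ⟨q, ⟨hadj, hinj⟩, hqW⟩ := hPm
  refine ⟨m, q, ⟨hadj, hinj⟩, hqW, ?_⟩
  by_contra hcon
  push_neg at hcon
  have hWm : m + 1 < W.card := by have := min_le_left W.card (M + 1); omega
  have hmM : m + 1 ≤ M := by have := min_le_right W.card (M + 1); omega
  -- front non-extendability
  have hfront : ∀ z, H.Adj z (q 0) → ∃ l, l ≤ m ∧ q l = z := by
    intro z hz
    by_contra hc
    push_neg at hc
    have hPm1 : P (m + 1) := by
      refine ⟨fun l => if l = 0 then z else q (l - 1), ⟨?_, ?_⟩, ?_⟩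
      · intro l hl
        rcases Nat.eq_zero_or_pos l with h0 | hpos
        · subst h0; simpa using hz
        · simp only [if_neg (by omega : ¬ (l = 0)), if_neg (by omega : ¬ (l + 1 = 0))]
          have hadj' := hadj (l - 1) (by omega)
          rwa [show l - 1 + 1 = l + 1 - 1 by omega] at hadj'
      · intro l l' hl hl' heq
        rcases Nat.eq_zero_or_pos l with h0 | hpos <;>
          rcases Nat.eq_zero_or_pos l' with h0' | hpos'
        · omega
        · subst h0
          simp only [if_pos rfl, if_neg (by omega : ¬ (l' = 0))] at heq
          exact absurd heq.symm (hc (l' - 1) (by omega))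
        · subst h0'
          simp only [if_pos rfl, if_neg (by omega : ¬ (l = 0))] at heq
          exact absurd heq (hc (l - 1) (by omega))
        · simp only [if_neg (by omega : ¬ (l = 0)), if_neg (by omega : ¬ (l' = 0))] at heq
          have := hinj (l - 1) (l' - 1) (by omega) (by omega) heq
          omega
      · intro l hl
        rcases Nat.eq_zero_or_pos l with h0 | hpos
        · subst h0; simpa using (hadjW z (q 0) hz).1
        · simp only [if_neg (by omega : ¬ (l = 0))]
          exact hqW (l - 1) (by omega)
    have := hmax (m + 1) hPm1
    omega
  -- back non-extendability
  have hback : ∀ z, H.Adj (q m) z → ∃ l, l ≤ m ∧ q l = z := by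
    intro z hz
    by_contra hc
    push_neg at hc
    have hPm1 : P (m + 1) := by
      refine ⟨fun l => if l ≤ m then q l else z, ⟨?_, ?_⟩, ?_⟩
      · intro l hl
        rcases Nat.lt_or_ge l m with h0 | h1
        · simp only [if_pos (by omega : l ≤ m), if_pos (by omega : l + 1 ≤ m)]
          exact hadj l h0
        · have hlm : l = m := by omega
          subst hlm
          simp only [if_pos (le_refl m), if_neg (by omega : ¬ (m + 1 ≤ m))]
          exact hz
      · intro l l' hl hl' heq
        rcases Nat.lt_or_ge m l with h0 | h1 <;> rcases Nat.lt_or_ge m l' with h0' | h1'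
        · omega
        · simp only [if_neg (by omega : ¬ (l ≤ m)), if_pos h1'] at heq
          exact absurd heq.symm (hc l' h1')
        · simp only [if_neg (by omega : ¬ (l' ≤ m)), if_pos h1] at heq
          exact absurd heq (hc l h1)
        · simp only [if_pos h1, if_pos h1'] at heq
          exact hinj l l' h1 h1' heq
      · intro l hl
        rcases Nat.lt_or_ge m l with h0 | h1
        · simp only [if_neg (by omega : ¬ (l ≤ m))]
          exact (hadjW (q m) z hz).2
        · simp only [if_pos h1]
          exact hqW l h1
    have := hmax (m + 1) hPm1
    omega
  -- index sets
  set J₁ : Finset ℕ := (Finset.range m).filter (fun l => H.Adj (q 0) (q (l + 1))) with hJ₁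
  set J₂ : Finset ℕ := (Finset.range m).filter (fun l => H.Adj (q m) (q l)) with hJ₂
  have hd0 : (W.filter (fun y => H.Adj (q 0) y)).card ≤ J₁.card := by
    apply Finset.card_le_card_of_injOn
      (fun y => (if h : ∃ l, l ≤ m ∧ q l = y then h.choose else 0) - 1)
    · intro y hy
      simp only [Finset.mem_coe, Finset.mem_filter] at hy
      have hex : ∃ l, l ≤ m ∧ q l = y := hfront y hy.2.symm
      simp only [dif_pos hex]
      obtain ⟨hl, hql⟩ := hex.choose_spec
      have hne0 : hex.choose ≠ 0 := by
        intro h0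
        rw [h0] at hql
        exact H.irrefl (hql ▸ hy.2)
      simp only [hJ₁, Finset.mem_coe, Finset.mem_filter, Finset.mem_range]
      constructor
      · omega
      · rw [show hex.choose - 1 + 1 = hex.choose by omega, hql]
        exact hy.2
    · intro y hy y' hy' heq
      simp only [Finset.coe_filter, Set.mem_setOf_eq] at hy hy'
      have hex : ∃ l, l ≤ m ∧ q l = y := hfront y hy.2.symm
      have hex' : ∃ l, l ≤ m ∧ q l = y' := hfront y' hy'.2.symm
      simp only [dif_pos hex, dif_pos hex'] at heq
      obtain ⟨hl, hql⟩ := hex.choose_spec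
      obtain ⟨hl', hql'⟩ := hex'.choose_spec
      have hne0 : hex.choose ≠ 0 := by
        intro h0; rw [h0] at hql; exact H.irrefl (hql ▸ hy.2)
      have hne0' : hex'.choose ≠ 0 := by
        intro h0; rw [h0] at hql'; exact H.irrefl (hql' ▸ hy'.2)
      have : hex.choose = hex'.choose := by omega
      rw [← hql, ← hql', this]
  have hdm : (W.filter (fun y => H.Adj (q m) y)).card ≤ J₂.card := by
    apply Finset.card_le_card_of_injOn
      (fun y => if h : ∃ l, l ≤ m ∧ q l = y then h.choose else 0)
    · intro y hy
      simp only [Finset.mem_coe, Finset.mem_filter] at hy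
      have hex : ∃ l, l ≤ m ∧ q l = y := hback y hy.2
      simp only [dif_pos hex]
      obtain ⟨hl, hql⟩ := hex.choose_spec
      have hnem : hex.choose ≠ m := by
        intro h0
        rw [h0] at hql
        exact H.irrefl (hql ▸ hy.2)
      simp only [hJ₂, Finset.mem_coe, Finset.mem_filter, Finset.mem_range]
      exact ⟨by omega, by rw [hql]; exact hy.2⟩
    · intro y hy y' hy' heq
      simp only [Finset.coe_filter, Set.mem_setOf_eq] at hy hy'
      have hex : ∃ l, l ≤ m ∧ q l = y := hback y hy.2
      have hex' : ∃ l, l ≤ m ∧ q l = y' := hback y' hy'.2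
      simp only [dif_pos hex, dif_pos hex'] at heq
      obtain ⟨hl, hql⟩ := hex.choose_spec
      obtain ⟨hl', hql'⟩ := hex'.choose_spec
      rw [← hql, ← hql', heq]
  -- crossing index
  have hq0W : q 0 ∈ W := hqW 0 (by omega)
  have hqmW : q m ∈ W := hqW m le_rfl
  have hcross : ∃ i, i < m ∧ H.Adj (q 0) (q (i + 1)) ∧ H.Adj (q m) (q i) := by
    have h1 := hdeg (q 0) hq0W
    have h2 := hdeg (q m) hqmW
    have hsub : J₁ ∪ J₂ ⊆ Finset.range m := by
      intro l hl
      rcases Finset.mem_union.mp hl with h | h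
      · exact Finset.mem_of_mem_filter l h
      · exact Finset.mem_of_mem_filter l h
    have hcard : J₁.card + J₂.card = (J₁ ∪ J₂).card + (J₁ ∩ J₂).card :=
      (Finset.card_union_add_card_inter J₁ J₂).symm
    have hUcard : (J₁ ∪ J₂).card ≤ m := by
      have := Finset.card_le_card hsub
      simpa using this
    have hIpos : 0 < (J₁ ∩ J₂).card := by omega
    obtain ⟨i, hi⟩ := Finset.card_pos.mp hIpos
    rw [Finset.mem_inter] at hi
    simp only [hJ₁, hJ₂, Finset.mem_filter, Finset.mem_range] at hi
    exact ⟨i, hi.1.1, hi.1.2, hi.2.2⟩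
  obtain ⟨i, him, hi1, hi2⟩ := hcross
  -- the cycle
  set c : ℕ → V := fun l => if l ≤ i then q l else q (m + i + 1 - l) with hcdef
  have hcle : ∀ l, l ≤ i → c l = q l := by
    intro l hl; simp only [hcdef]; rw [if_pos hl]
  have hcgt : ∀ l, i < l → c l = q (m + i + 1 - l) := by
    intro l hl; simp only [hcdef]; rw [if_neg (by omega)]
  have hcq : ∀ l, l ≤ m → ∃ l', l' ≤ m ∧ c l = q l' := by
    intro l hl
    by_cases h : l ≤ i
    · exact ⟨l, hl, hcle l h⟩
    · exact ⟨m + i + 1 - l, by omega, hcgt l (by omega)⟩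
  have hqc : ∀ l', l' ≤ m → ∃ l, l ≤ m ∧ q l' = c l := by
    intro l' hl'
    by_cases h : l' ≤ i
    · exact ⟨l', by omega, (hcle l' h).symm⟩
    · refine ⟨m + i + 1 - l', by omega, ?_⟩
      rw [hcgt (m + i + 1 - l') (by omega), show m + i + 1 - (m + i + 1 - l') = l' by omega]
  have hcW : ∀ l, l ≤ m → c l ∈ W := by
    intro l hl
    obtain ⟨l', hl', heq⟩ := hcq l hl
    rw [heq]; exact hqW l' hl'
  have hcinj : ∀ l l', l ≤ m → l' ≤ m → c l = c l' → l = l' := by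
    intro l l' hl hl' heq
    by_cases h : l ≤ i <;> by_cases h' : l' ≤ i
    · rw [hcle l h, hcle l' h'] at heq
      exact hinj l l' (by omega) (by omega) heq
    · rw [hcle l h, hcgt l' (by omega)] at heq
      have := hinj l (m + i + 1 - l') (by omega) (by omega) heq
      omega
    · rw [hcgt l (by omega), hcle l' h'] at heq
      have := hinj (m + i + 1 - l) l' (by omega) (by omega) heq
      omega
    · rw [hcgt l (by omega), hcgt l' (by omega)] at heq
      have := hinj (m + i + 1 - l) (m + i + 1 - l') (by omega) (by omega) heq
      omega
  have hcyc : ∀ l, l ≤ m → H.Adj (c l) (c ((l + 1) % (m + 1))) := by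
    intro l hl
    rcases Nat.lt_or_ge l m with hlm | hlm
    · rw [Nat.mod_eq_of_lt (by omega)]
      rcases Nat.lt_or_ge l i with hli | hli
      · rw [hcle l (by omega), hcle (l + 1) (by omega)]
        exact hadj l hlm
      · rcases Nat.eq_or_lt_of_le hli with hei | hgi
        · rw [hcle l (by omega), hcgt (l + 1) (by omega),
            show m + i + 1 - (l + 1) = m by omega, ← hei]
          exact hi2.symm
        · rw [hcgt l (by omega), hcgt (l + 1) (by omega)]
          have hadj' := hadj (m + i - l) (by omega)
          rw [show m + i - l + 1 = m + i + 1 - l by omega] at hadj'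
          rw [show m + i + 1 - (l + 1) = m + i - l by omega]
          exact hadj'.symm
    · have hlm' : l = m := by omega
      subst hlm'
      rw [Nat.mod_self, hcgt m (by omega), hcle 0 (by omega),
        show m + i + 1 - m = i + 1 by omega]
      exact hi1.symm
  -- a vertex outside the path
  have himg : ∃ w, w ∈ W ∧ ∀ l, l ≤ m → q l ≠ w := by
    set img := (Finset.range (m + 1)).image q with himgdef
    have hcard : img.card ≤ m + 1 := le_trans (Finset.card_image_le) (by simp)
    have hns : ¬ (W ⊆ img) := by
      intro hsub
      have := Finset.card_le_card hsub
      omega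
    obtain ⟨w, hw, hwn⟩ := Finset.not_subset.mp hns
    refine ⟨w, hw, fun l hl heq => hwn ?_⟩
    rw [himgdef, Finset.mem_image]
    exact ⟨l, by simp [Nat.lt_succ_iff, hl], heq⟩
  obtain ⟨w, hwW, hwout⟩ := himg
  -- boundary edge
  set R : Set V := {x | ∃ l, l ≤ m ∧ q l = x} with hR
  have hwR : w ∉ R := by
    rintro ⟨l, hl, heq⟩
    exact hwout l hl heq
  have hq0R : q 0 ∈ R := ⟨0, by omega, rfl⟩
  obtain ⟨p⟩ := hconn w hwW (q 0) hq0W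
  obtain ⟨z, y, hzR, hyR, hzy⟩ := walk_boundary R p hwR hq0R
  obtain ⟨l₀, hl₀, hql₀⟩ := hyR
  obtain ⟨s, hs, hcs⟩ := hqc l₀ hl₀
  -- extended path via the cycle
  have hPm1 : P (m + 1) := by
    refine ⟨fun l => if l = 0 then z else c ((s + (l - 1)) % (m + 1)), ⟨?_, ?_⟩, ?_⟩
    · intro l hl
      rcases Nat.eq_zero_or_pos l with h0 | hpos
      · subst h0
        simp only [if_pos rfl, if_neg (by omega : ¬ (0 + 1 = 0))]
        rw [show (0:ℕ) + 1 - 1 = 0 by omega, Nat.add_zero, Nat.mod_eq_of_lt (by omega)]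
        rw [← hql₀, hcs] at hzy
        exact hzy
      · simp only [if_neg (by omega : ¬ (l = 0)), if_neg (by omega : ¬ (l + 1 = 0))]
        have ha := hcyc ((s + (l - 1)) % (m + 1)) (by
          have := Nat.mod_lt (s + (l - 1)) (show 0 < m + 1 by omega)
          omega)
        rw [Nat.mod_add_mod, show s + (l - 1) + 1 = s + (l + 1 - 1) by omega] at ha
        exact ha
    · intro l l' hl hl' heq
      rcases Nat.eq_zero_or_pos l with h0 | hpos <;>
        rcases Nat.eq_zero_or_pos l' with h0' | hpos'
      · omega
      · exfalso
        subst h0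
        simp only [if_pos rfl, if_neg (by omega : ¬ (l' = 0))] at heq
        have haI : (s + (l' - 1)) % (m + 1) ≤ m := by
          have := Nat.mod_lt (s + (l' - 1)) (show 0 < m + 1 by omega); omega
        obtain ⟨l'', hl'', heq'⟩ := hcq _ haI
        exact hzR ⟨l'', hl'', (heq.trans heq').symm⟩
      · exfalso
        subst h0'
        simp only [if_pos rfl, if_neg (by omega : ¬ (l = 0))] at heq
        have haI : (s + (l - 1)) % (m + 1) ≤ m := by
          have := Nat.mod_lt (s + (l - 1)) (show 0 < m + 1 by omega); omega
        obtain ⟨l'', hl'', heq'⟩ := hcq _ haI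
        exact hzR ⟨l'', hl'', heq'.symm.trans heq⟩
      · simp only [if_neg (by omega : ¬ (l = 0)), if_neg (by omega : ¬ (l' = 0))] at heq
        have h1 : (s + (l - 1)) % (m + 1) ≤ m := by
          have := Nat.mod_lt (s + (l - 1)) (show 0 < m + 1 by omega); omega
        have h2 : (s + (l' - 1)) % (m + 1) ≤ m := by
          have := Nat.mod_lt (s + (l' - 1)) (show 0 < m + 1 by omega); omega
        have hmodeq := hcinj _ _ h1 h2 heq
        have hMeq : (l - 1) % (m + 1) = (l' - 1) % (m + 1) := by
          have hme : Nat.ModEq (m + 1) (s + (l - 1)) (s + (l' - 1)) := hmodeq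
          exact Nat.ModEq.add_left_cancel' s hme
        rw [Nat.mod_eq_of_lt (by omega), Nat.mod_eq_of_lt (by omega)] at hMeq
        omega
    · intro l hl
      rcases Nat.eq_zero_or_pos l with h0 | hpos
      · subst h0
        simp only [if_pos rfl]
        exact (hadjW z y hzy).1
      · simp only [if_neg (by omega : ¬ (l = 0))]
        apply hcW
        have := Nat.mod_lt (s + (l - 1)) (show 0 < m + 1 by omega)
        omega
  have := hmax (m + 1) hPm1
  omega



variable {V : Type*} [Fintype V] [DecidableEq V]

def degIn (G : SimpleGraph V) [DecidableRel G.Adj] (S : Finset V) (x : V) : ℕ :=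
  (S.filter (fun y => G.Adj x y)).card

def SP (G : SimpleGraph V) [DecidableRel G.Adj] (A B : Finset V) : ℕ :=
  ∑ x ∈ A, degIn G (A ∪ B) x

lemma degIn_insert (G : SimpleGraph V) [DecidableRel G.Adj] (S : Finset V) (a x : V)
    (ha : a ∉ S) : degIn G (insert a S) x = degIn G S x + (if G.Adj x a then 1 else 0) := by
  unfold degIn
  rw [Finset.filter_insert]
  by_cases h : G.Adj x a
  · rw [if_pos h, if_pos h,
      Finset.card_insert_of_notMem (fun hc => ha (Finset.mem_of_mem_filter a hc))]
  · rw [if_neg h, if_neg h, Nat.add_zero]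

lemma degIn_union (G : SimpleGraph V) [DecidableRel G.Adj] (S T : Finset V) (x : V)
    (hST : Disjoint S T) : degIn G (S ∪ T) x = degIn G S x + degIn G T x := by
  unfold degIn
  rw [Finset.filter_union, Finset.card_union_of_disjoint (Finset.disjoint_filter_filter hST)]

lemma sum_ite_adj (G : SimpleGraph V) [DecidableRel G.Adj] (S : Finset V) (a : V) :
    (∑ x ∈ S, if G.Adj x a then 1 else 0) = degIn G S a := by
  rw [← Finset.sum_filter (fun x => G.Adj x a) (fun _ => (1:ℕ)), Finset.sum_const, smul_eq_mul,
    mul_one]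
  unfold degIn
  congr 1
  exact Finset.filter_congr (fun x _ => by rw [G.adj_comm])

lemma degIn_erase_self (G : SimpleGraph V) [DecidableRel G.Adj] (S : Finset V) (a : V) :
    degIn G (S.erase a) a = degIn G S a := by
  unfold degIn
  rw [Finset.filter_erase, Finset.erase_eq_of_notMem]
  intro hc
  exact G.irrefl (Finset.mem_filter.mp hc).2

lemma SP_erase_a (G : SimpleGraph V) [DecidableRel G.Adj] (A B : Finset V) (a : V)
    (ha : a ∈ A) (hAB : Disjoint A B) :
    SP G A B = SP G (A.erase a) B + (2 * degIn G A a + degIn G B a) := by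
  unfold SP
  have hins : A ∪ B = insert a ((A.erase a) ∪ B) := by
    rw [← Finset.insert_union, Finset.insert_erase ha]
  have hanot : a ∉ (A.erase a) ∪ B := by
    simp only [Finset.mem_union, Finset.mem_erase]
    rintro (⟨hne, _⟩ | hB)
    · exact hne rfl
    · exact (Finset.disjoint_left.mp hAB ha) hB
  have hterm : ∀ x, degIn G (A ∪ B) x
      = degIn G ((A.erase a) ∪ B) x + (if G.Adj x a then 1 else 0) := by
    intro x
    rw [hins, degIn_insert G _ a x hanot]
  calc ∑ x ∈ A, degIn G (A ∪ B) x
      = ∑ x ∈ A.erase a, degIn G (A ∪ B) x + degIn G (A ∪ B) a := by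
        rw [Finset.sum_erase_add _ _ ha]
    _ = (∑ x ∈ A.erase a, (degIn G ((A.erase a) ∪ B) x + (if G.Adj x a then 1 else 0)))
          + (degIn G A a + degIn G B a) := by
        rw [← degIn_union G A B a hAB]
        exact congrArg₂ (· + ·) (Finset.sum_congr rfl fun x _ => hterm x) rfl
    _ = (∑ x ∈ A.erase a, degIn G ((A.erase a) ∪ B) x)
          + degIn G (A.erase a) a + (degIn G A a + degIn G B a) := by
        rw [Finset.sum_add_distrib, sum_ite_adj]
    _ = _ := by
        rw [degIn_erase_self]
        ring

lemma SP_erase_b (G : SimpleGraph V) [DecidableRel G.Adj] (A B : Finset V) (b : V)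
    (hb : b ∈ B) (hAB : Disjoint A B) :
    SP G A B = SP G A (B.erase b) + degIn G A b := by
  unfold SP
  have hins : A ∪ B = insert b (A ∪ B.erase b) := by
    rw [Finset.union_comm A (B.erase b), ← Finset.insert_union, Finset.insert_erase hb,
      Finset.union_comm]
  have hbnot : b ∉ A ∪ B.erase b := by
    simp only [Finset.mem_union, Finset.mem_erase]
    rintro (hA | ⟨hne, _⟩)
    · exact (Finset.disjoint_right.mp hAB hb) hA
    · exact hne rfl
  have hterm : ∀ x, degIn G (A ∪ B) x
      = degIn G (A ∪ B.erase b) x + (if G.Adj x b then 1 else 0) := by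
    intro x
    rw [hins, degIn_insert G _ b x hbnot]
  rw [Finset.sum_congr rfl fun x _ => hterm x, Finset.sum_add_distrib, sum_ite_adj]

lemma SP_split (G : SimpleGraph V) [DecidableRel G.Adj] (A B : Finset V)
    (p : V → Prop) [DecidablePred p]
    (hcross : ∀ x y, G.Adj x y → x ∈ A → y ∈ A ∪ B → (p x ↔ p y)) :
    SP G A B = SP G (A.filter p) (B.filter p)
      + SP G (A.filter (fun x => ¬ p x)) (B.filter (fun x => ¬ p x)) := by
  unfold SP
  have hA : A = (A.filter p) ∪ (A.filter (fun x => ¬ p x)) := (Finset.filter_union_filter_not_eq p A).symm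
  have key1 : ∀ x ∈ A.filter p,
      degIn G (A ∪ B) x = degIn G ((A.filter p) ∪ (B.filter p)) x := by
    intro x hx
    have hpx : p x := (Finset.mem_filter.mp hx).2
    have hxA : x ∈ A := (Finset.mem_filter.mp hx).1
    unfold degIn
    congr 1
    apply Finset.ext
    intro y
    simp only [Finset.mem_filter, Finset.mem_union]
    constructor
    · rintro ⟨hy, hadj⟩
      have hpy : p y := (hcross x y hadj hxA (Finset.mem_union.mpr hy)).mp hpx
      rcases hy with h | h
      · exact ⟨Or.inl ⟨h, hpy⟩, hadj⟩
      · exact ⟨Or.inr ⟨h, hpy⟩, hadj⟩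
    · rintro ⟨hy, hadj⟩
      rcases hy with ⟨h, _⟩ | ⟨h, _⟩
      · exact ⟨Or.inl h, hadj⟩
      · exact ⟨Or.inr h, hadj⟩
  have key2 : ∀ x ∈ A.filter (fun x => ¬ p x),
      degIn G (A ∪ B) x
        = degIn G ((A.filter (fun x => ¬ p x)) ∪ (B.filter (fun x => ¬ p x))) x := by
    intro x hx
    have hpx : ¬ p x := (Finset.mem_filter.mp hx).2
    have hxA : x ∈ A := (Finset.mem_filter.mp hx).1
    unfold degIn
    congr 1
    apply Finset.ext
    intro y
    simp only [Finset.mem_filter, Finset.mem_union]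
    constructor
    · rintro ⟨hy, hadj⟩
      have hpy : ¬ p y := fun hpy => hpx ((hcross x y hadj hxA
        (Finset.mem_union.mpr hy)).mpr hpy)
      rcases hy with h | h
      · exact ⟨Or.inl ⟨h, hpy⟩, hadj⟩
      · exact ⟨Or.inr ⟨h, hpy⟩, hadj⟩
    · rintro ⟨hy, hadj⟩
      rcases hy with ⟨h, _⟩ | ⟨h, _⟩
      · exact ⟨Or.inl h, hadj⟩
      · exact ⟨Or.inr h, hadj⟩
  rw [show (∑ x ∈ A, degIn G (A ∪ B) x)
      = (∑ x ∈ A.filter p, degIn G (A ∪ B) x)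
        + (∑ x ∈ A.filter (fun x => ¬ p x), degIn G (A ∪ B) x) from by
    rw [← Finset.sum_union (Finset.disjoint_filter_filter_not A A p),
      Finset.filter_union_filter_not_eq]]
  rw [Finset.sum_congr rfl key1, Finset.sum_congr rfl key2]

lemma SP_le (G : SimpleGraph V) [DecidableRel G.Adj] (A B : Finset V) (hAB : Disjoint A B) :
    SP G A B ≤ A.card * ((A ∪ B).card - 1) := by
  unfold SP
  calc ∑ x ∈ A, degIn G (A ∪ B) x ≤ ∑ _x ∈ A, ((A ∪ B).card - 1) := by
        apply Finset.sum_le_sum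
        intro x hx
        unfold degIn
        have hsub : (A ∪ B).filter (fun y => G.Adj x y) ⊆ (A ∪ B).erase x := by
          intro y hy
          rw [Finset.mem_erase]
          obtain ⟨hy1, hy2⟩ := Finset.mem_filter.mp hy
          exact ⟨fun hc => G.irrefl (hc ▸ hy2), hy1⟩
        calc ((A ∪ B).filter (fun y => G.Adj x y)).card ≤ ((A ∪ B).erase x).card :=
              Finset.card_le_card hsub
          _ ≤ (A ∪ B).card - 1 := by
              rw [Finset.card_erase_of_mem (Finset.mem_union_left _ hx)]
    _ = A.card * ((A ∪ B).card - 1) := by rw [Finset.sum_const, smul_eq_mul]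



section core
variable {V : Type*} [Fintype V] [DecidableEq V]

/-- `t` disjoint paths with `2 * k i - 1` vertices, endpoints in `A`,
all vertices in `A ∪ B`. -/
def HasForestF (G : SimpleGraph V) (A B : Finset V) (t : ℕ) (k : Fin t → ℕ) : Prop :=
  ∃ p : Fin t → ℕ → V,
    (∀ i l, l ≤ 2 * k i - 2 → p i l ∈ A ∪ B) ∧
    (∀ i, p i 0 ∈ A) ∧ (∀ i, p i (2 * k i - 2) ∈ A) ∧
    (∀ i l, l < 2 * k i - 2 → G.Adj (p i l) (p i (l + 1))) ∧
    (∀ i l l', l ≤ 2 * k i - 2 → l' ≤ 2 * k i - 2 → p i l = p i l' → l = l') ∧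
    (∀ i i' l l', i ≠ i' → l ≤ 2 * k i - 2 → l' ≤ 2 * k i' - 2 → p i l ≠ p i' l')

lemma HasForestF.mono {G : SimpleGraph V} {A B A' B' : Finset V} {t : ℕ} {k : Fin t → ℕ}
    (h : HasForestF G A B t k) (hA : A ⊆ A') (hB : B ⊆ B') : HasForestF G A' B' t k := by
  obtain ⟨p, h1, h2, h3, h4, h5, h6⟩ := h
  refine ⟨p, fun i l hl => ?_, fun i => hA (h2 i), fun i => hA (h3 i), h4, h5, h6⟩
  rcases Finset.mem_union.mp (h1 i l hl) with h | h
  · exact Finset.mem_union_left _ (hA h)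
  · exact Finset.mem_union_right _ (hB h)

theorem core (G : SimpleGraph V) [DecidableRel G.Adj]
    (t : ℕ) (ht : 1 ≤ t) (k : Fin t → ℕ) (hk : ∀ i, 2 ≤ k i)
    (κ : ℕ) (hκ : κ = ∑ i, (k i - 1)) :
    ∀ N (A B : Finset V), A.card + B.card ≤ N → Disjoint A B →
      ¬ HasForestF G A B t k →
      2 * SP G A B ≤ (4 * κ + t - 2) * (2 * A.card + B.card) := by
  classical
  have hκt : t ≤ κ := by
    rw [hκ]
    calc t = ∑ _i : Fin t, 1 := by simp
      _ ≤ _ := Finset.sum_le_sum (fun i _ => by have := hk i; omega)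
  intro N
  induction N with
  | zero =>
    intro A B hN hAB hfree
    have hA : A = ∅ := Finset.card_eq_zero.mp (by omega)
    subst hA
    simp [SP]
  | succ N ih =>
    intro A B hN hAB hfree
    by_cases hdelA : ∃ a ∈ A, 2 * degIn G A a + degIn G B a ≤ 4 * κ + t - 2
    · obtain ⟨a, haA, hdeg⟩ := hdelA
      have hApos : 1 ≤ A.card := Finset.card_pos.mpr ⟨a, haA⟩
      have hrec := ih (A.erase a) B
        (by rw [Finset.card_erase_of_mem haA]; omega)
        (Finset.disjoint_of_subset_left (Finset.erase_subset a A) hAB)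
        (fun hc => hfree (hc.mono (Finset.erase_subset a A) le_rfl))
      rw [SP_erase_a G A B a haA hAB]
      rw [Finset.card_erase_of_mem haA] at hrec
      have hXge : 2 ≤ 2 * A.card + B.card := by omega
      calc 2 * (SP G (A.erase a) B + (2 * degIn G A a + degIn G B a))
          = 2 * SP G (A.erase a) B + 2 * (2 * degIn G A a + degIn G B a) := by ring
        _ ≤ (4 * κ + t - 2) * (2 * (A.card - 1) + B.card) + 2 * (4 * κ + t - 2) := by
            have h2 : 2 * (2 * degIn G A a + degIn G B a) ≤ 2 * (4 * κ + t - 2) := by omega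
            exact Nat.add_le_add hrec h2
        _ = (4 * κ + t - 2) * ((2 * (A.card - 1) + B.card) + 2) := by ring
        _ = (4 * κ + t - 2) * (2 * A.card + B.card) := by
            congr 1
            omega
    by_cases hdelB : ∃ b ∈ B, 2 * degIn G A b ≤ 4 * κ + t - 2
    · obtain ⟨b, hbB, hdeg⟩ := hdelB
      have hBpos : 1 ≤ B.card := Finset.card_pos.mpr ⟨b, hbB⟩
      have hrec := ih A (B.erase b)
        (by rw [Finset.card_erase_of_mem hbB]; omega)
        (Finset.disjoint_of_subset_right (Finset.erase_subset b B) hAB)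
        (fun hc => hfree (hc.mono le_rfl (Finset.erase_subset b B)))
      rw [SP_erase_b G A B b hbB hAB]
      rw [Finset.card_erase_of_mem hbB] at hrec
      calc 2 * (SP G A (B.erase b) + degIn G A b)
          = 2 * SP G A (B.erase b) + 2 * degIn G A b := by ring
        _ ≤ (4 * κ + t - 2) * (2 * A.card + (B.card - 1)) + (4 * κ + t - 2) := by
            exact Nat.add_le_add hrec (by omega)
        _ = (4 * κ + t - 2) * ((2 * A.card + (B.card - 1)) + 1) := by ring
        _ = (4 * κ + t - 2) * (2 * A.card + B.card) := by
            congr 1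
            omega
    -- no deletable vertices
    push_neg at hdelA hdelB
    by_contra hP
    push_neg at hP
    -- A is nonempty
    have hSPpos : 0 < SP G A B := by
      rcases Nat.eq_zero_or_pos (SP G A B) with h0 | h
      · rw [h0] at hP; omega
      · exact h
    have hAne : A.Nonempty := by
      by_contra hc
      rw [Finset.not_nonempty_iff_eq_empty] at hc
      subst hc
      simp [SP] at hSPpos
    -- the auxiliary graph
    set H : SimpleGraph V := {
      Adj := fun x y => G.Adj x y ∧ ((x ∈ A ∧ y ∈ A) ∨ (x ∈ A ∧ y ∈ B) ∨ (x ∈ B ∧ y ∈ A)),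
      symm := ⟨by
        rintro x y ⟨hadj, hm⟩
        exact ⟨hadj.symm, by tauto⟩⟩,
      loopless := ⟨fun x ⟨h, _⟩ => G.irrefl h⟩ } with hH
    have hHadj : ∀ x y, H.Adj x y ↔ G.Adj x y ∧
        ((x ∈ A ∧ y ∈ A) ∨ (x ∈ A ∧ y ∈ B) ∨ (x ∈ B ∧ y ∈ A)) := fun x y => Iff.rfl
    haveI : DecidableRel H.Adj := fun x y => Classical.dec _
    set W : Finset V := A ∪ B with hW
    have hadjW : ∀ x y, H.Adj x y → x ∈ W ∧ y ∈ W := by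
      intro x y hxy
      rw [hHadj] at hxy
      constructor <;> (rw [hW, Finset.mem_union]; tauto)
    -- case: H disconnected on W
    by_cases hconn : ∀ x ∈ W, ∀ y ∈ W, H.Reachable x y
    swap
    · push_neg at hconn
      obtain ⟨x₀, hx₀W, y₀, hy₀W, hnr⟩ := hconn
      set pp : V → Prop := fun z => H.Reachable x₀ z with hpp
      haveI : DecidablePred pp := fun z => Classical.dec _
      have hcross : ∀ x y, G.Adj x y → x ∈ A → y ∈ A ∪ B → (pp x ↔ pp y) := by
        intro x y hadj hxA hyW
        have hxy : H.Adj x y := by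
          rw [hHadj]
          refine ⟨hadj, ?_⟩
          rcases Finset.mem_union.mp hyW with h | h
          · exact Or.inl ⟨hxA, h⟩
          · exact Or.inr (Or.inl ⟨hxA, h⟩)
        constructor
        · intro hr; exact hr.trans hxy.reachable
        · intro hr; exact hr.trans hxy.symm.reachable
      have hsplit := SP_split G A B pp hcross
      set A₁ := A.filter pp with hA₁
      set B₁ := B.filter pp with hB₁
      set A₂ := A.filter (fun x => ¬ pp x) with hA₂
      set B₂ := B.filter (fun x => ¬ pp x) with hB₂
      have hcardA : A₁.card + A₂.card = A.card := Finset.card_filter_add_card_filter_not _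
      have hcardB : B₁.card + B₂.card = B.card := Finset.card_filter_add_card_filter_not _
      -- side 1 nonempty
      have hx₀p : pp x₀ := SimpleGraph.Reachable.refl x₀
      have hs1 : 1 ≤ A₁.card + B₁.card := by
        rcases Finset.mem_union.mp hx₀W with h | h
        · have : x₀ ∈ A₁ := Finset.mem_filter.mpr ⟨h, hx₀p⟩
          have := Finset.card_pos.mpr ⟨x₀, this⟩
          omega
        · have : x₀ ∈ B₁ := Finset.mem_filter.mpr ⟨h, hx₀p⟩
          have := Finset.card_pos.mpr ⟨x₀, this⟩
          omega
      have hs2 : 1 ≤ A₂.card + B₂.card := by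
        have hy₀p : ¬ pp y₀ := hnr
        rcases Finset.mem_union.mp hy₀W with h | h
        · have : y₀ ∈ A₂ := Finset.mem_filter.mpr ⟨h, hy₀p⟩
          have := Finset.card_pos.mpr ⟨y₀, this⟩
          omega
        · have : y₀ ∈ B₂ := Finset.mem_filter.mpr ⟨h, hy₀p⟩
          have := Finset.card_pos.mpr ⟨y₀, this⟩
          omega
      have hd1 : Disjoint A₁ B₁ :=
        Finset.disjoint_of_subset_left (Finset.filter_subset _ _)
          (Finset.disjoint_of_subset_right (Finset.filter_subset _ _) hAB)
      have hd2 : Disjoint A₂ B₂ :=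
        Finset.disjoint_of_subset_left (Finset.filter_subset _ _)
          (Finset.disjoint_of_subset_right (Finset.filter_subset _ _) hAB)
      have hrec1 := ih A₁ B₁ (by omega) hd1
        (fun hc => hfree (hc.mono (Finset.filter_subset _ _) (Finset.filter_subset _ _)))
      have hrec2 := ih A₂ B₂ (by omega) hd2
        (fun hc => hfree (hc.mono (Finset.filter_subset _ _) (Finset.filter_subset _ _)))
      have : 2 * SP G A B ≤ (4 * κ + t - 2) * (2 * A.card + B.card) := by
        rw [hsplit]
        calc 2 * (SP G A₁ B₁ + SP G A₂ B₂) = 2 * SP G A₁ B₁ + 2 * SP G A₂ B₂ := by ring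
          _ ≤ (4 * κ + t - 2) * (2 * A₁.card + B₁.card)
              + (4 * κ + t - 2) * (2 * A₂.card + B₂.card) := Nat.add_le_add hrec1 hrec2
          _ = (4 * κ + t - 2) * ((2 * A₁.card + B₁.card) + (2 * A₂.card + B₂.card)) := by ring
          _ = (4 * κ + t - 2) * (2 * A.card + B.card) := by congr 1; omega
      omega
    -- H connected on W
    · have hWcard : W.card = A.card + B.card := Finset.card_union_of_disjoint hAB
      have hWne : W.Nonempty := by
        obtain ⟨a, ha⟩ := hAne
        exact ⟨a, Finset.mem_union_left _ ha⟩
      have hApos : 1 ≤ A.card := Finset.card_pos.mpr hAne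
      -- minimum degree condition
      have hdeg : ∀ x ∈ W, (4 * κ + t - 1) ≤ 2 * (W.filter (fun y => H.Adj x y)).card := by
        intro x hx
        rcases Finset.mem_union.mp hx with hxA | hxB
        · have hfe : W.filter (fun y => H.Adj x y)
              = (A.filter (fun y => G.Adj x y)) ∪ (B.filter (fun y => G.Adj x y)) := by
            apply Finset.ext
            intro y
            simp only [Finset.mem_filter, Finset.mem_union, hW, hHadj]
            constructor
            · rintro ⟨hy, hadj, hm⟩
              rcases hy with h | h
              · exact Or.inl ⟨h, hadj⟩
              · exact Or.inr ⟨h, hadj⟩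
            · rintro (⟨hy, hadj⟩ | ⟨hy, hadj⟩)
              · exact ⟨Or.inl hy, hadj, Or.inl ⟨hxA, hy⟩⟩
              · exact ⟨Or.inr hy, hadj, Or.inr (Or.inl ⟨hxA, hy⟩)⟩
          rw [hfe, Finset.card_union_of_disjoint
            (Finset.disjoint_filter_filter hAB)]
          have := hdelA x hxA
          unfold degIn at this
          omega
        · have hfe : W.filter (fun y => H.Adj x y) = A.filter (fun y => G.Adj x y) := by
            apply Finset.ext
            intro y
            simp only [Finset.mem_filter, Finset.mem_union, hW, hHadj]
            have hxnA : x ∉ A := Finset.disjoint_right.mp hAB hxB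
            constructor
            · rintro ⟨hy, hadj, hm⟩
              rcases hm with ⟨h1, h2⟩ | ⟨h1, h2⟩ | ⟨h1, h2⟩
              · exact absurd h1 hxnA
              · exact absurd h1 hxnA
              · exact ⟨h2, hadj⟩
            · rintro ⟨hy, hadj⟩
              exact ⟨Or.inl hy, hadj, Or.inr (Or.inr ⟨hxB, hy⟩)⟩
          rw [hfe]
          have := hdelB x hxB
          unfold degIn at this
          omega
      -- W is large
      have hn' : 4 * κ + t ≤ W.card := by
        by_contra hc
        push_neg at hc
        have h1 : 2 * SP G A B ≤ 2 * (A.card * (W.card - 1)) :=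
          Nat.mul_le_mul_left 2 (SP_le G A B hAB)
        have h2 : 2 * (A.card * (W.card - 1)) = (2 * A.card) * (W.card - 1) := by ring
        have h3 : (2 * A.card) * (W.card - 1) ≤ (2 * A.card + B.card) * (4 * κ + t - 2) :=
          Nat.mul_le_mul (by omega) (by omega)
        have h4 : (2 * A.card + B.card) * (4 * κ + t - 2)
            = (4 * κ + t - 2) * (2 * A.card + B.card) := by ring
        omega
      -- get a long path
      obtain ⟨m, q, ⟨hqadj, hqinj⟩, hqW, hqlen⟩ :=
        longest_path H W (4 * κ + t - 1) hadjW hdeg hconn hWne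
      have hmlen : 4 * κ + t ≤ m + 1 := by
        have hmin : 4 * κ + t ≤ min W.card (4 * κ + t - 1 + 1) := le_min hn' (by omega)
        omega
      -- chop the path
      set f : ℕ → Prop := fun pos => q pos ∈ A with hf
      have hgap : ∀ l, l < m → f l ∨ f (l + 1) := by
        intro l hl
        have := hqadj l hl
        rw [hHadj] at this
        rcases this.2 with ⟨h1, h2⟩ | ⟨h1, h2⟩ | ⟨h1, h2⟩
        · exact Or.inl h1
        · exact Or.inl h1
        · exact Or.inr h2
      set D : ℕ → ℕ := fun j => if h : j < t then 2 * k ⟨j, h⟩ - 2 else 2 with hD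
      have hDval : ∀ i : Fin t, D i.val = 2 * k i - 2 := by
        intro i
        simp only [hD, dif_pos i.isLt, Fin.eta]
      have hD2 : ∀ j, j < t → 2 ≤ D j := by
        intro j hj
        have : D j = 2 * k ⟨j, hj⟩ - 2 := by simp only [hD, dif_pos hj]
        have := hk ⟨j, hj⟩
        omega
      have hDe : ∀ j, j < t → Even (D j) := by
        intro j hj
        have h1 : D j = 2 * k ⟨j, hj⟩ - 2 := by simp only [hD, dif_pos hj]
        have := hk ⟨j, hj⟩
        exact ⟨k ⟨j, hj⟩ - 1, by omega⟩
      have hsum : ∑ j ∈ Finset.range t, (2 * D j + 1) = 4 * κ + t := by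
        rw [← Fin.sum_univ_eq_sum_range (fun j => 2 * D j + 1) t]
        have hterm : ∀ i : Fin t, 2 * D i.val + 1 = 4 * (k i - 1) + 1 := by
          intro i
          rw [hDval i]
          have := hk i
          omega
        rw [Finset.sum_congr rfl (fun i _ => hterm i)]
        rw [Finset.sum_add_distrib, Finset.sum_const, ← Finset.mul_sum]
        simp [hκ, Finset.card_univ]
      -- starting point
      have hx₀ : ∃ x₀, x₀ ≤ 1 ∧ f x₀ := by
        by_cases h0 : f 0
        · exact ⟨0, by omega, h0⟩
        · have hm1 : 0 < m := by omega
          rcases hgap 0 hm1 with h | h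
          · exact absurd h h0
          · exact ⟨1, le_rfl, h⟩
      obtain ⟨x₀, hx₀le, hfx₀⟩ := hx₀
      have hbud : x₀ + (∑ j ∈ Finset.range t, (2 * D (0 + j) + 1)) ≤ m + 2 := by
        have : ∀ j ∈ Finset.range t, 2 * D (0 + j) + 1 = 2 * D j + 1 := by
          intro j _; rw [Nat.zero_add]
        rw [Finset.sum_congr rfl this, hsum]
        omega
      obtain ⟨v, hxv, hv, hord⟩ := blocks f m t D hgap hD2 hDe t 0 x₀ (by omega) hfx₀ hbud
      -- build the forest
      apply hfree
      refine ⟨fun i l => q (v i.val + l), ?_, ?_, ?_, ?_, ?_, ?_⟩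
      · intro i l hl
        have hi := hv i.val (by omega) i.isLt
        rw [hDval i] at hi
        exact hqW (v i.val + l) (by omega)
      · intro i
        have hi := hv i.val (by omega) i.isLt
        have : q (v i.val + 0) ∈ A := by rw [Nat.add_zero]; exact hi.1
        exact this
      · intro i
        have hi := hv i.val (by omega) i.isLt
        rw [hDval i] at hi
        exact hi.2.1
      · intro i l hl
        have hi := hv i.val (by omega) i.isLt
        rw [hDval i] at hi
        have hlt : v i.val + l < m := by omega
        have := hqadj (v i.val + l) hlt
        rw [hHadj] at this
        show G.Adj (q (v i.val + l)) (q (v i.val + (l + 1)))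
        rw [show v i.val + (l + 1) = v i.val + l + 1 by omega]
        exact this.1
      · intro i l l' hl hl' heq
        have hi := hv i.val (by omega) i.isLt
        rw [hDval i] at hi
        have := hqinj (v i.val + l) (v i.val + l') (by omega) (by omega) heq
        omega
      · intro i i' l l' hii' hl hl' heq
        have hi := hv i.val (by omega) i.isLt
        have hi' := hv i'.val (by omega) i'.isLt
        rw [hDval i] at hi
        rw [hDval i'] at hi'
        have hvv := hqinj (v i.val + l) (v i'.val + l') (by omega) (by omega) heq
        have hne : i.val ≠ i'.val := fun hc => hii' (Fin.val_injective hc)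
        rcases Nat.lt_or_ge i.val i'.val with hlt | hge
        · have := hord i.val i'.val (by omega) hlt i'.isLt
          rw [hDval i] at this
          omega
        · have hlt' : i'.val < i.val := by omega
          have := hord i'.val i.val (by omega) hlt' i.isLt
          rw [hDval i'] at this
          omega


end core

section EmbGlue
variable {V : Type*} [Fintype V] [DecidableEq V]

lemma emb (G : SimpleGraph V) (t : ℕ) (k : Fin t → ℕ) (hk : ∀ i, 2 ≤ k i) (u : V)
    (A B : Finset V) (hA : ∀ x ∈ A, G.Adj u x) (hu : u ∉ A ∪ B) :
    HasForestF G A B t k → ContainsCopy (interCycles t k) G := by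
  rintro ⟨p, h1, h2, h3, h4, h5, h6⟩
  have hbnd : ∀ (i : Fin t) (j : Fin (2 * k i - 1)), (j : ℕ) ≤ 2 * k i - 2 := by
    intro i j
    have := j.isLt
    have := hk i
    omega
  set F : Option (Σ i : Fin t, Fin (2 * k i - 1)) → V := fun o =>
    match o with
    | none => u
    | some ⟨i, j⟩ => p i (j : ℕ) with hF
  have hFinj : Function.Injective F := by
    rintro (_ | ⟨i, j⟩) (_ | ⟨i', j'⟩) heq
    · rfl
    · exfalso
      apply hu
      rw [show u = p i' (j' : ℕ) from heq]
      exact h1 i' (j' : ℕ) (hbnd i' j')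
    · exfalso
      apply hu
      rw [show u = p i (j : ℕ) from heq.symm]
      exact h1 i (j : ℕ) (hbnd i j)
    · by_cases hii : i = i'
      · subst hii
        have : (j : ℕ) = (j' : ℕ) := h5 i (j : ℕ) (j' : ℕ) (hbnd i j) (hbnd i j') heq
        have : j = j' := Fin.ext this
        subst this
        rfl
      · exact absurd heq (h6 i i' (j : ℕ) (j' : ℕ) hii (hbnd i j) (hbnd i' j'))
  refine ⟨⟨F, hFinj⟩, ?_⟩
  rintro (_ | ⟨i, j⟩) (_ | ⟨i', j'⟩) hadj <;>
    rw [interCycles, SimpleGraph.fromRel_adj] at hadj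
  · exact absurd rfl hadj.1
  · -- hub to path
    have hrel : (j' : ℕ) = 0 ∨ (j' : ℕ) = 2 * k i' - 2 := by
      rcases hadj.2 with h | h
      · exact h
      · exact h.elim
    show G.Adj u (p i' (j' : ℕ))
    rcases hrel with h | h
    · rw [h]; exact hA _ (h2 i')
    · rw [h]; exact hA _ (h3 i')
  · have hrel : (j : ℕ) = 0 ∨ (j : ℕ) = 2 * k i - 2 := by
      rcases hadj.2 with h | h
      · exact h.elim
      · exact h
    show G.Adj (p i (j : ℕ)) u
    apply SimpleGraph.Adj.symm
    rcases hrel with h | h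
    · rw [h]; exact hA _ (h2 i)
    · rw [h]; exact hA _ (h3 i)
  · -- path edges
    show G.Adj (p i (j : ℕ)) (p i' (j' : ℕ))
    rcases hadj.2 with ⟨hii, hjj⟩ | ⟨hii, hjj⟩
    · subst hii
      have hlt : (j : ℕ) < 2 * k i - 2 := by
        have := j'.isLt
        have := hk i
        omega
      rw [← hjj]
      exact h4 i (j : ℕ) hlt
    · subst hii
      have hlt : (j' : ℕ) < 2 * k i' - 2 := by
        have := j.isLt
        have := hk i'
        omega
      rw [← hjj]
      exact (h4 i' (j' : ℕ) hlt).symm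

lemma handshake_sub (G : SimpleGraph V) [DecidableRel G.Adj] (A : Finset V) :
    ∑ x ∈ A, degIn G A x = 2 * (eW G (↑A : Set V)) := by
  classical
  set GA : SimpleGraph V := {
    Adj := fun x y => G.Adj x y ∧ x ∈ A ∧ y ∈ A,
    symm := ⟨by rintro x y ⟨h, h1, h2⟩; exact ⟨h.symm, h2, h1⟩⟩,
    loopless := ⟨fun x h => G.irrefl h.1⟩ } with hGA
  haveI : DecidableRel GA.Adj := fun x y => Classical.dec _
  have hset : {e ∈ G.edgeSet | ∀ v ∈ e, v ∈ (↑A : Set V)} = GA.edgeSet := by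
    apply Set.eq_of_subset_of_subset
    · rintro e ⟨he, hmem⟩
      induction e with
      | h x y =>
        rw [SimpleGraph.mem_edgeSet] at he ⊢
        exact ⟨he, hmem x (Sym2.mem_mk_left x y), hmem y (Sym2.mem_mk_right x y)⟩
    · rintro e he
      induction e with
      | h x y =>
        rw [SimpleGraph.mem_edgeSet] at he
        refine ⟨he.1, ?_⟩
        intro v hv
        rcases Sym2.mem_iff.mp hv with h | h
        · subst h; exact he.2.1
        · subst h; exact he.2.2
  have hcard : eW G (↑A : Set V) = GA.edgeFinset.card := by
    rw [eW, hset, ← SimpleGraph.coe_edgeFinset, Set.ncard_coe_finset]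
  have hdeg : ∀ x, GA.degree x = if x ∈ A then degIn G A x else 0 := by
    intro x
    rw [← SimpleGraph.card_neighborFinset_eq_degree]
    by_cases hx : x ∈ A
    · rw [if_pos hx]
      congr 1
      apply Finset.ext
      intro y
      rw [SimpleGraph.mem_neighborFinset, Finset.mem_filter]
      constructor
      · rintro ⟨h, _, h2⟩; exact ⟨h2, h⟩
      · rintro ⟨h1, h2⟩; exact ⟨h2, hx, h1⟩
    · rw [if_neg hx]
      rw [Finset.card_eq_zero]
      apply Finset.eq_empty_of_forall_notMem
      intro y hy
      rw [SimpleGraph.mem_neighborFinset] at hy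
      exact hx hy.2.1
  have hsum := GA.sum_degrees_eq_twice_card_edges
  rw [← hcard] at hsum
  calc ∑ x ∈ A, degIn G A x = ∑ x ∈ A, GA.degree x := by
        apply Finset.sum_congr rfl
        intro x hx
        rw [hdeg x, if_pos hx]
    _ = ∑ x : V, GA.degree x := by
        apply Finset.sum_subset (Finset.subset_univ A)
        intro x _ hx
        rw [hdeg x, if_neg hx]
    _ = 2 * eW G (↑A : Set V) := hsum

lemma cross_count (G : SimpleGraph V) [DecidableRel G.Adj] (A B : Finset V)
    (hAB : Disjoint A B) :
    ∑ x ∈ A, degIn G B x = eB G (↑A : Set V) (↑B : Set V) := by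
  classical
  set GAB : SimpleGraph V := {
    Adj := fun x y => G.Adj x y ∧ ((x ∈ A ∧ y ∈ B) ∨ (x ∈ B ∧ y ∈ A)),
    symm := ⟨fun x y h => ⟨h.1.symm, by tauto⟩⟩,
    loopless := ⟨fun x h => G.irrefl h.1⟩ } with hGAB
  haveI : DecidableRel GAB.Adj := fun x y => Classical.dec _
  have hset : {e ∈ G.edgeSet | ∃ u ∈ (↑A : Set V), ∃ w ∈ (↑B : Set V), e = s(u, w)}
      = GAB.edgeSet := by
    apply Set.eq_of_subset_of_subset
    · rintro e ⟨he, a, ha, b, hb, hab⟩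
      subst hab
      rw [SimpleGraph.mem_edgeSet] at he ⊢
      exact ⟨he, Or.inl ⟨ha, hb⟩⟩
    · rintro e he
      induction e with
      | h x y =>
        rw [SimpleGraph.mem_edgeSet] at he
        obtain ⟨hadj, hm⟩ := he
        refine ⟨(G.mem_edgeSet).mpr hadj, ?_⟩
        rcases hm with ⟨h1, h2⟩ | ⟨h1, h2⟩
        · exact ⟨x, h1, y, h2, rfl⟩
        · exact ⟨y, h2, x, h1, Sym2.eq_swap⟩
  have hcard : eB G (↑A : Set V) (↑B : Set V) = GAB.edgeFinset.card := by
    rw [eB, hset, ← SimpleGraph.coe_edgeFinset, Set.ncard_coe_finset]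
  have hdeg : ∀ x, GAB.degree x
      = if x ∈ A then degIn G B x else (if x ∈ B then degIn G A x else 0) := by
    intro x
    rw [← SimpleGraph.card_neighborFinset_eq_degree]
    by_cases hx : x ∈ A
    · have hxB : x ∉ B := Finset.disjoint_left.mp hAB hx
      rw [if_pos hx]
      congr 1
      apply Finset.ext
      intro y
      rw [SimpleGraph.mem_neighborFinset, Finset.mem_filter]
      constructor
      · rintro ⟨h, ⟨h1, h2⟩ | ⟨h1, h2⟩⟩
        · exact ⟨h2, h⟩
        · exact absurd h1 hxB
      · rintro ⟨h1, h2⟩; exact ⟨h2, Or.inl ⟨hx, h1⟩⟩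
    · rw [if_neg hx]
      by_cases hxB : x ∈ B
      · rw [if_pos hxB]
        congr 1
        apply Finset.ext
        intro y
        rw [SimpleGraph.mem_neighborFinset, Finset.mem_filter]
        constructor
        · rintro ⟨h, ⟨h1, h2⟩ | ⟨h1, h2⟩⟩
          · exact absurd h1 hx
          · exact ⟨h2, h⟩
        · rintro ⟨h1, h2⟩; exact ⟨h2, Or.inr ⟨hxB, h1⟩⟩
      · rw [if_neg hxB, Finset.card_eq_zero]
        apply Finset.eq_empty_of_forall_notMem
        intro y hy
        rw [SimpleGraph.mem_neighborFinset] at hy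
        rcases hy.2 with ⟨h1, _⟩ | ⟨h1, _⟩
        · exact hx h1
        · exact hxB h1
  have hsum := GAB.sum_degrees_eq_twice_card_edges
  rw [← hcard] at hsum
  have hswap : ∑ x ∈ A, degIn G B x = ∑ y ∈ B, degIn G A y := by
    calc ∑ x ∈ A, degIn G B x = ∑ x ∈ A, ∑ y ∈ B, (if G.Adj y x then 1 else 0) := by
          apply Finset.sum_congr rfl
          intro x _
          rw [sum_ite_adj G B x]
      _ = ∑ y ∈ B, ∑ x ∈ A, (if G.Adj y x then 1 else 0) := Finset.sum_comm
      _ = ∑ y ∈ B, ∑ x ∈ A, (if G.Adj x y then 1 else 0) := by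
          apply Finset.sum_congr rfl
          intro y _
          apply Finset.sum_congr rfl
          intro x _
          congr 1
          · exact propext (G.adj_comm y x)
      _ = ∑ y ∈ B, degIn G A y := by
          apply Finset.sum_congr rfl
          intro y _
          rw [sum_ite_adj G A y]
  have hsplit : ∑ x : V, GAB.degree x = ∑ x ∈ A, degIn G B x + ∑ y ∈ B, degIn G A y := by
    rw [show (Finset.univ : Finset V) = (A ∪ B) ∪ (Finset.univ \ (A ∪ B)) by
      rw [Finset.union_sdiff_of_subset (Finset.subset_univ _)]]
    rw [Finset.sum_union (Finset.disjoint_sdiff), Finset.sum_union hAB]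
    have hz : ∑ x ∈ Finset.univ \ (A ∪ B), GAB.degree x = 0 := by
      apply Finset.sum_eq_zero
      intro x hx
      rw [Finset.mem_sdiff, Finset.mem_union] at hx
      rw [hdeg x, if_neg (fun h => hx.2 (Or.inl h)), if_neg (fun h => hx.2 (Or.inr h))]
    rw [hz]
    have hA' : ∑ x ∈ A, GAB.degree x = ∑ x ∈ A, degIn G B x := by
      apply Finset.sum_congr rfl
      intro x hx
      rw [hdeg x, if_pos hx]
    have hB' : ∑ x ∈ B, GAB.degree x = ∑ x ∈ B, degIn G A x := by
      apply Finset.sum_congr rfl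
      intro x hx
      rw [hdeg x, if_neg (Finset.disjoint_right.mp hAB hx), if_pos hx]
    rw [hA', hB']
    ring
  rw [hsplit, hswap] at hsum
  omega

lemma SP_eq (G : SimpleGraph V) [DecidableRel G.Adj] (A B : Finset V) (hAB : Disjoint A B) :
    SP G A B = 2 * eW G (↑A : Set V) + eB G (↑A : Set V) (↑B : Set V) := by
  unfold SP
  calc ∑ x ∈ A, degIn G (A ∪ B) x = ∑ x ∈ A, (degIn G A x + degIn G B x) := by
        apply Finset.sum_congr rfl
        intro x _
        exact degIn_union G A B x hAB
    _ = ∑ x ∈ A, degIn G A x + ∑ x ∈ A, degIn G B x := Finset.sum_add_distrib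
    _ = 2 * eW G (↑A : Set V) + eB G (↑A : Set V) (↑B : Set V) := by
        rw [handshake_sub, cross_count G A B hAB]

end EmbGlue
end Stmt10Proof

/-- if `G` on `n` vertices has no copy of `C_{2k₁,…,2k_t}`
(all `k i ≥ 2`, `κ = ∑ (k i - 1)`), then for every vertex `u`,
`2·e(N₁(u)) + e(N₁(u), N₂(u)) ≤ (2κ + t/2 - 1)(d(u) + n - 1)`, where
`N_i(u)` is the set of vertices at distance exactly `i` from `u`. -/
theorem stmt10 {V : Type*} [Fintype V] (G : SimpleGraph V)
    (t : ℕ) (ht : 1 ≤ t) (k : Fin t → ℕ) (hk : ∀ i, 2 ≤ k i)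
    (κ : ℕ) (hκ : κ = ∑ i, (k i - 1))
    (hfree : ¬ ContainsCopy (interCycles t k) G) :
    ∀ u : V,
      2 * (eW G {v | G.dist u v = 1} : ℝ) +
          (eB G {v | G.dist u v = 1} {v | G.dist u v = 2} : ℝ) ≤
        (2 * κ + t / 2 - 1 : ℝ) *
          (({v | G.dist u v = 1}.ncard : ℝ) + (Fintype.card V : ℝ) - 1) := by
  classical
  intro u
  set A : Finset V := Finset.univ.filter (fun v => G.dist u v = 1) with hAdef
  set B : Finset V := Finset.univ.filter (fun v => G.dist u v = 2) with hBdef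
  have hSA : {v | G.dist u v = 1} = (↑A : Set V) := by
    ext v
    simp [hAdef]
  have hSB : {v | G.dist u v = 2} = (↑B : Set V) := by
    ext v
    simp [hBdef]
  have hdisj : Disjoint A B := by
    rw [Finset.disjoint_left]
    intro x hx hx'
    rw [hAdef, Finset.mem_filter] at hx
    rw [hBdef, Finset.mem_filter] at hx'
    omega
  have hadjA : ∀ x ∈ A, G.Adj u x := by
    intro x hx
    rw [hAdef, Finset.mem_filter] at hx
    exact SimpleGraph.dist_eq_one_iff_adj.mp hx.2
  have hu : u ∉ A ∪ B := by
    rw [Finset.mem_union, hAdef, hBdef, Finset.mem_filter, Finset.mem_filter]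
    rw [SimpleGraph.dist_self]
    omega
  have hfc : ¬ HasForestF G A B t k := fun h => hfree (emb G t k hk u A B hadjA hu h)
  have hcore := core G t ht k hk κ hκ (A.card + B.card) A B le_rfl hdisj hfc
  rw [SP_eq G A B hdisj] at hcore
  have hκt : 1 ≤ κ := by
    rw [hκ]
    have hi0 : (0 : ℕ) < t := by omega
    calc 1 ≤ k ⟨0, hi0⟩ - 1 := by have := hk ⟨0, hi0⟩; omega
      _ ≤ ∑ i, (k i - 1) :=
          Finset.single_le_sum (f := fun i => k i - 1) (fun i _ => Nat.zero_le _)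
            (Finset.mem_univ (⟨0, hi0⟩ : Fin t))
  have hcardle : A.card + B.card + 1 ≤ Fintype.card V := by
    have hsub : insert u (A ∪ B) ⊆ Finset.univ := Finset.subset_univ _
    have hcard := Finset.card_le_card hsub
    rw [Finset.card_insert_of_notMem hu, Finset.card_union_of_disjoint hdisj,
      Finset.card_univ] at hcard
    omega
  have hN : 2 * (2 * eW G (↑A : Set V) + eB G (↑A : Set V) (↑B : Set V))
      ≤ (4 * κ + t - 2) * (A.card + (Fintype.card V - 1)) := by
    calc 2 * (2 * eW G (↑A : Set V) + eB G (↑A : Set V) (↑B : Set V))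
        ≤ (4 * κ + t - 2) * (2 * A.card + B.card) := hcore
      _ ≤ (4 * κ + t - 2) * (A.card + (Fintype.card V - 1)) :=
          Nat.mul_le_mul_left _ (by omega)
  rw [hSA, hSB, Set.ncard_coe_finset]
  have hcast := (Nat.cast_le (α := ℝ)).mpr hN
  have h2le : (2 : ℕ) ≤ 4 * κ + t := by omega
  have h1le : (1 : ℕ) ≤ Fintype.card V := by omega
  push_cast [Nat.cast_sub h2le, Nat.cast_sub h1le] at hcast
  have key : (4 * (κ:ℝ) + (t:ℝ) - 2) * ((A.card : ℝ) + ((Fintype.card V : ℝ) - 1))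
      = 2 * ((2 * (κ:ℝ) + (t:ℝ)/2 - 1) * ((A.card:ℝ) + (Fintype.card V : ℝ) - 1)) := by
    ring
  linarith [hcast]
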